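/- Let a, b, c be real numbers. The cubic polynomial λ³ + aλ² + bλ + c is Schur stable if and only if |c| < 1, |a + c| < 1 + b, and b − a·c < 1 − c². -/

import Mathlib

set_option maxHeartbeats 1000000


private lemma abs_lt_one_iff' (z : ℂ) : ‖z‖ < 1 ↔ z.re^2 + z.im^2 < 1 := by
  rw [Complex.norm_def, Real.sqrt_lt' one_pos, Complex.normSq_apply]
  constructor <;> intro h <;> nlinarith

private lemma quad_root_lt (p q : ℝ) (hq : q < 1) (hp1 : 0 < 1+p+q) (hp2 : 0 < 1-p+q)
    (z : ℂ) (hz : z^2 + p*z + q = 0) : ‖z‖ < 1 := by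
  set x := z.re with hx; set y := z.im with hy
  have hre : x^2 - y^2 + p*x + q = 0 := by
    have := congrArg Complex.re hz
    simp [pow_two, Complex.mul_re, Complex.mul_im, Complex.add_re] at this
    linarith [this]
  have him : 2*x*y + p*y = 0 := by
    have := congrArg Complex.im hz
    simp [pow_two, Complex.mul_re, Complex.mul_im] at this
    linarith [this]
  rw [abs_lt_one_iff', ← hx, ← hy]
  rcases eq_or_ne y 0 with h | h
  · rw [h] at hre ⊢
    by_contra hcon
    push_neg at hcon
    rcases le_or_gt 1 x with hx1 | hx1
    · nlinarith [mul_nonneg (by linarith : (0:ℝ) ≤ x - 1) (by linarith : (0:ℝ) ≤ x - q)]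
    · have hx2 : x ≤ -1 := by nlinarith
      nlinarith [mul_nonneg (by linarith : (0:ℝ) ≤ -x - 1) (by linarith : (0:ℝ) ≤ -x - q)]
  · have h2 : 2*x + p = 0 := by
      have hy' : y * (2*x + p) = 0 := by linarith [him]
      rcases mul_eq_zero.1 hy' with h' | h'
      · exact absurd h' h
      · exact h'
    nlinarith

private lemma cubic_factor (a b c r : ℝ) (hr : r^3 + a*r^2 + b*r + c = 0) (z : ℂ) :
    z^3 + (a:ℂ)*z^2 + b*z + c = (z - r) * (z^2 + ((a:ℂ)+r)*z + ((b:ℂ) + a*r + r^2)) := by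
  have h : (r:ℂ)^3 + a*r^2 + b*r + c = 0 := by exact_mod_cast congrArg (Complex.ofReal) hr
  linear_combination h

private lemma cubic_real_root (a b c : ℝ) : ∃ r : ℝ, r^3 + a*r^2 + b*r + c = 0 := by
  set M := 1 + |a| + |b| + |c| with hM
  have hM1 : 1 ≤ M := by
    have := abs_nonneg a; have := abs_nonneg b; have := abs_nonneg c; linarith
  have hfc : Continuous fun x : ℝ => x^3 + a*x^2 + b*x + c := by continuity
  have hneg : (-M)^3 + a*(-M)^2 + b*(-M) + c ≤ 0 := by
    nlinarith [abs_nonneg a, abs_nonneg b, abs_nonneg c, neg_abs_le a, le_abs_self a,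
      neg_abs_le b, le_abs_self b, neg_abs_le c, le_abs_self c, sq_nonneg M]
  have hpos : (0:ℝ) ≤ M^3 + a*M^2 + b*M + c := by
    nlinarith [abs_nonneg a, abs_nonneg b, abs_nonneg c, neg_abs_le a, le_abs_self a,
      neg_abs_le b, le_abs_self b, neg_abs_le c, le_abs_self c, sq_nonneg M]
  have hsub := intermediate_value_Icc (by linarith : -M ≤ M) hfc.continuousOn
  obtain ⟨r, _, hr⟩ := hsub ⟨hneg, hpos⟩
  exact ⟨r, hr⟩

private lemma aux_pos (r p q : ℝ) (hr1 : -1 < r) (hr2 : r < 1) (hrq1 : -1 < r*q)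
    (hrq2 : r*q < 1) (hp1 : 0 < 1+p+q) (hp2 : 0 < 1-p+q) : 0 < 1 + r*p + r^2*q := by
  rcases le_or_gt 0 r with h | h
  · have h1 : 0 ≤ r*(p+1+q) := mul_nonneg h (by linarith)
    have h2 : 0 < (1-r)*(1-r*q) := mul_pos (by linarith) (by linarith)
    nlinarith [h1, h2]
  · have h1 : 0 ≤ (-r)*((1+q)-p) := mul_nonneg (by linarith) (by linarith)
    have h2 : 0 < (1+r)*(1+r*q) := mul_pos (by linarith) (by linarith)
    nlinarith [h1, h2]

/-- Corollary (cubic case of Schur's theorem): the real cubic polynomial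
`λ³ + aλ² + bλ + c` is Schur stable (all complex roots in the open unit disk)
iff `|c| < 1`, `|a + c| < 1 + b`, and `b − a·c < 1 − c²`. -/
theorem cubic_schur_stable (a b c : ℝ) :
    (∀ z : ℂ, z ^ 3 + (a : ℂ) * z ^ 2 + (b : ℂ) * z + (c : ℂ) = 0 → ‖z‖ < 1) ↔
      (|c| < 1 ∧ |a + c| < 1 + b ∧ b - a * c < 1 - c ^ 2) := by
  constructor
  · intro H
    obtain ⟨r, hr⟩ := cubic_real_root a b c
    have habs_r : |r| < 1 := by
      have h := H r (by exact_mod_cast congrArg (Complex.ofReal) hr)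
      simpa using h
    rw [abs_lt] at habs_r
    obtain ⟨hr1, hr2⟩ := habs_r
    obtain ⟨p, hp⟩ : ∃ p : ℝ, p = a + r := ⟨_, rfl⟩
    obtain ⟨q, hq⟩ : ∃ q : ℝ, q = b + a*r + r^2 := ⟨_, rfl⟩
    have key : (-1 < q ∧ q < 1) ∧ 0 < 1+p+q ∧ 0 < 1-p+q := by
      rcases le_or_gt 0 (p^2 - 4*q) with hD | hD
      · -- real quadratic roots
        obtain ⟨s, hs⟩ : ∃ s : ℝ, s = (-p + Real.sqrt (p^2-4*q))/2 := ⟨_, rfl⟩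
        obtain ⟨t, ht⟩ : ∃ t : ℝ, t = (-p - Real.sqrt (p^2-4*q))/2 := ⟨_, rfl⟩
        have hss : Real.sqrt (p^2-4*q) ^ 2 = p^2 - 4*q := Real.sq_sqrt hD
        have hs0 : s^2 + p*s + q = 0 := by rw [hs]; linear_combination hss/4
        have ht0 : t^2 + p*t + q = 0 := by rw [ht]; linear_combination hss/4
        have hs3 : s^3 + a*s^2 + b*s + c = 0 := by
          have hid : s^3 + a*s^2 + b*s + c = (s-r)*(s^2+p*s+q) := by
            rw [hp, hq]; linear_combination hr
          rw [hid, hs0, mul_zero]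
        have ht3 : t^3 + a*t^2 + b*t + c = 0 := by
          have hid : t^3 + a*t^2 + b*t + c = (t-r)*(t^2+p*t+q) := by
            rw [hp, hq]; linear_combination hr
          rw [hid, ht0, mul_zero]
        have habs_s : |s| < 1 := by
          have h := H s (by exact_mod_cast congrArg (Complex.ofReal) hs3)
          simpa using h
        have habs_t : |t| < 1 := by
          have h := H t (by exact_mod_cast congrArg (Complex.ofReal) ht3)
          simpa using h
        rw [abs_lt] at habs_s habs_t
        obtain ⟨hs1, hs2⟩ := habs_s
        obtain ⟨ht1, ht2⟩ := habs_t
        have hst : s*t = q := by rw [hs, ht]; linear_combination (-1/4) * hss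
        have hsum : s + t = -p := by rw [hs, ht]; ring
        refine ⟨⟨?_, ?_⟩, ?_, ?_⟩
        · nlinarith [mul_pos (by linarith : (0:ℝ) < 1-s) (by linarith : (0:ℝ) < 1+t),
            mul_pos (by linarith : (0:ℝ) < 1+s) (by linarith : (0:ℝ) < 1-t)]
        · nlinarith [mul_pos (by linarith : (0:ℝ) < 1-s) (by linarith : (0:ℝ) < 1-t),
            mul_pos (by linarith : (0:ℝ) < 1+s) (by linarith : (0:ℝ) < 1+t)]
        · nlinarith [mul_pos (by linarith : (0:ℝ) < 1-s) (by linarith : (0:ℝ) < 1-t)]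
        · nlinarith [mul_pos (by linarith : (0:ℝ) < 1+s) (by linarith : (0:ℝ) < 1+t)]
      · -- complex conjugate roots
        obtain ⟨u, hu⟩ : ∃ u : ℝ, u = Real.sqrt (4*q - p^2) := ⟨_, rfl⟩
        have hu2 : u^2 = 4*q - p^2 := by rw [hu]; exact Real.sq_sqrt (by linarith)
        obtain ⟨z, hzre, hzim⟩ : ∃ z : ℂ, z.re = -p/2 ∧ z.im = u/2 := ⟨⟨-p/2, u/2⟩, rfl, rfl⟩
        have hzq : z^2 + (p:ℂ)*z + (q:ℂ) = 0 := by
          apply Complex.ext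
          · simp only [pow_two, Complex.add_re, Complex.mul_re, Complex.mul_im,
              Complex.ofReal_re, Complex.ofReal_im, Complex.zero_re, hzre, hzim]
            linear_combination (-1/4)*hu2
          · simp only [pow_two, Complex.add_im, Complex.mul_re, Complex.mul_im,
              Complex.ofReal_re, Complex.ofReal_im, Complex.zero_im, hzre, hzim]
            ring
        have hz3 : z^3 + (a:ℂ)*z^2 + b*z + c = 0 := by
          rw [cubic_factor a b c r hr]
          have hpq : ((a:ℂ)+r) = ((p:ℝ):ℂ) := by rw [hp]; push_cast; ring
          have hqq : ((b:ℂ) + a*r + r^2) = ((q:ℝ):ℂ) := by rw [hq]; push_cast; ring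
          rw [hpq, hqq, hzq, mul_zero]
        have habs_z := H z hz3
        rw [abs_lt_one_iff', hzre, hzim] at habs_z
        have hq2 : q < 1 := by nlinarith [hu2, habs_z]
        refine ⟨⟨by nlinarith, hq2⟩, by nlinarith [sq_nonneg (2+p)], by nlinarith [sq_nonneg (2-p)]⟩
    obtain ⟨⟨hq1, hq2⟩, hp1, hp2⟩ := key
    have e1 : 1+a+b+c = (1-r)*(1+p+q) := by rw [hp, hq]; linear_combination hr
    have e2 : 1-a+b-c = (1+r)*(1-p+q) := by rw [hp, hq]; linear_combination -hr
    have e3 : 1-b+a*c-c^2 = (1-q)*(1+r*p+r^2*q) := by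
      rw [hp, hq]; linear_combination (a + r*(b+a*r+r^2) - c) * hr
    have e4 : c = -(r*q) := by rw [hq]; linear_combination hr
    have hrq1 : -1 < r*q := by
      nlinarith [mul_pos (by linarith : (0:ℝ) < 1-r) (by linarith : (0:ℝ) < 1+q),
        mul_pos (by linarith : (0:ℝ) < 1+r) (by linarith : (0:ℝ) < 1-q)]
    have hrq2 : r*q < 1 := by
      nlinarith [mul_pos (by linarith : (0:ℝ) < 1-r) (by linarith : (0:ℝ) < 1-q),
        mul_pos (by linarith : (0:ℝ) < 1+r) (by linarith : (0:ℝ) < 1+q)]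
    refine ⟨?_, ?_, ?_⟩
    · rw [abs_lt]; constructor <;> [linarith [e4, hrq2]; linarith [e4, hrq1]]
    · rw [abs_lt]
      constructor
      · nlinarith [e1, mul_pos (by linarith : (0:ℝ) < 1-r) hp1]
      · nlinarith [e2, mul_pos (by linarith : (0:ℝ) < 1+r) hp2]
    · have hpos := aux_pos r p q hr1 hr2 hrq1 hrq2 hp1 hp2
      nlinarith [e3, mul_pos (by linarith : (0:ℝ) < 1-q) hpos]
  · rintro ⟨hc, hac, h3⟩ z hz
    rw [abs_lt] at hc hac
    obtain ⟨hc1, hc2⟩ := hc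
    obtain ⟨hac1, hac2⟩ := hac
    have hfc : Continuous fun x : ℝ => x^3 + a*x^2 + b*x + c := by continuity
    have hneg : (-1:ℝ)^3 + a*(-1)^2 + b*(-1) + c < 0 := by nlinarith
    have hpos1 : (0:ℝ) < 1^3 + a*1^2 + b*1 + c := by nlinarith
    have hsub := intermediate_value_Icc (by norm_num : (-1:ℝ) ≤ 1) hfc.continuousOn
    obtain ⟨r, hrIcc, hr⟩ := hsub ⟨le_of_lt hneg, le_of_lt hpos1⟩
    replace hr : r^3 + a*r^2 + b*r + c = 0 := hr
    have hr1 : -1 < r := by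
      rcases eq_or_lt_of_le hrIcc.1 with h | h
      · exfalso; rw [← h] at hr; nlinarith
      · exact h
    have hr2 : r < 1 := by
      rcases eq_or_lt_of_le hrIcc.2 with h | h
      · exfalso; rw [h] at hr; nlinarith
      · exact h
    obtain ⟨p, hp⟩ : ∃ p : ℝ, p = a + r := ⟨_, rfl⟩
    obtain ⟨q, hq⟩ : ∃ q : ℝ, q = b + a*r + r^2 := ⟨_, rfl⟩
    have e1 : 1+a+b+c = (1-r)*(1+p+q) := by rw [hp, hq]; linear_combination hr
    have e2 : 1-a+b-c = (1+r)*(1-p+q) := by rw [hp, hq]; linear_combination -hr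
    have e3 : 1-b+a*c-c^2 = (1-q)*(1+r*p+r^2*q) := by
      rw [hp, hq]; linear_combination (a + r*(b+a*r+r^2) - c) * hr
    have e4 : c = -(r*q) := by rw [hq]; linear_combination hr
    have hp1 : 0 < 1+p+q := by
      have hprod : 0 < (1-r)*(1+p+q) := by rw [← e1]; linarith
      rcases mul_pos_iff.mp hprod with ⟨_, h⟩ | ⟨h, _⟩
      · exact h
      · linarith
    have hp2 : 0 < 1-p+q := by
      have hprod : 0 < (1+r)*(1-p+q) := by rw [← e2]; linarith
      rcases mul_pos_iff.mp hprod with ⟨_, h⟩ | ⟨h, _⟩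
      · exact h
      · linarith
    have hrq1 : -1 < r*q := by nlinarith [e4]
    have hrq2 : r*q < 1 := by nlinarith [e4]
    have hq2 : q < 1 := by
      by_contra hcon
      push_neg at hcon
      have hpos3 := aux_pos r p q hr1 hr2 hrq1 hrq2 hp1 hp2
      have hprod3 : 0 < (1-q)*(1+r*p+r^2*q) := by rw [← e3]; nlinarith
      nlinarith [mul_nonneg (by linarith : (0:ℝ) ≤ q-1) hpos3.le]
    have hfac := cubic_factor a b c r hr z
    rw [hfac] at hz
    rcases mul_eq_zero.mp hz with h | h
    · have hzr : z = (r:ℂ) := sub_eq_zero.mp h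
      rw [hzr, Complex.norm_real, Real.norm_eq_abs]
      exact abs_lt.mpr ⟨hr1, hr2⟩
    · apply quad_root_lt p q hq2 hp1 hp2 z
      have hpq : ((a:ℂ)+r) = ((p:ℝ):ℂ) := by rw [hp]; push_cast; ring
      have hqq : ((b:ℂ) + a*r + r^2) = ((q:ℝ):ℂ) := by rw [hq]; push_cast; ring
      rw [hpq, hqq] at h
      exact h
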